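/- arXiv:2503.14981 — 2 statements merged into one kernel-verified Lean document; each statement's English description precedes it below -/
import Mathlib

section
/- Let 𝔥 be a Euclidean space with spectral decomposition system (𝒳, S, γ, (Λ_a)_{a∈A}), and let D be an S-invariant subset of 𝒳 (i.e., s • x ∈ D for all x ∈ D and s ∈ S). Then: (i) the interior of γ⁻¹(D) equals γ⁻¹(interior of D); (ii) the closure of γ⁻¹(D) equals γ⁻¹(closure of D); (iii) γ⁻¹(D) is closed if and only if D is closed; (iv) γ⁻¹(D) is convex if and only if D is convex. -/
open scoped InnerProductSpace

/-- A spectral decomposition system `(𝓧, S, γ, (Λ a)_{a ∈ A})` for a Euclidean space `𝓗`,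
with spectral-induced ordering mapping `τ`. -/
structure SpectralDecompositionSystem
    (𝓗 : Type*) (𝓧 : Type*) [NormedAddCommGroup 𝓗] [InnerProductSpace ℝ 𝓗]
    [NormedAddCommGroup 𝓧] [InnerProductSpace ℝ 𝓧]
    (S : Type*) [Group S] [MulAction S 𝓧]
    {A : Type*} (γ : 𝓗 → 𝓧) (Λ : A → 𝓧 →ₗ[ℝ] 𝓗) (τ : 𝓧 → 𝓧) : Prop where
  /-- `S` acts on `𝓧` by linear maps. -/
  smul_add_smul : ∀ (s : S) (c : ℝ) (x y : 𝓧), s • (c • x + y) = c • (s • x) + s • y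
  /-- `S` acts on `𝓧` by isometries. -/
  norm_smul : ∀ (s : S) (x : 𝓧), ‖s • x‖ = ‖x‖
  /-- Each `Λ a` is a (linear) isometry. -/
  norm_lambda : ∀ (a : A) (x : 𝓧), ‖Λ a x‖ = ‖x‖
  /-- `τ` is `S`-invariant. -/
  tau_smul : ∀ (s : S) (x : 𝓧), τ (s • x) = τ x
  /-- `τ x` belongs to the orbit `S • x`. -/
  tau_orbit : ∀ x : 𝓧, ∃ s : S, τ x = s • x
  /-- `γ ∘ Λ a = τ` for all `a ∈ A`. -/
  gamma_lambda : ∀ (a : A) (x : 𝓧), γ (Λ a x) = τ x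
  /-- Every element of `𝓗` admits a spectral decomposition. -/
  exists_decomp : ∀ Z : 𝓗, ∃ a : A, Z = Λ a (γ Z)
  /-- Von Neumann-type trace inequality. -/
  inner_le : ∀ Z W : 𝓗, ⟪Z, W⟫_ℝ ≤ ⟪γ Z, γ W⟫_ℝ

variable {𝓗 𝓧 : Type*} [NormedAddCommGroup 𝓗] [InnerProductSpace ℝ 𝓗]
  [FiniteDimensional ℝ 𝓗] [NormedAddCommGroup 𝓧] [InnerProductSpace ℝ 𝓧]
  [FiniteDimensional ℝ 𝓧] {S : Type*} [Group S] [MulAction S 𝓧]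
  {A : Type*} [Nonempty A]

/-! ### Auxiliary lemmas -/

private lemma aux_sum_pad {β : Type*} [AddCommMonoid β] {m n : ℕ} (hmn : m ≤ n) (g : ℕ → β)
    (hg : ∀ j, m ≤ j → g j = 0) : ∑ j : Fin n, g j = ∑ j : Fin m, g j := by
  rw [Fin.sum_univ_eq_sum_range g n, Fin.sum_univ_eq_sum_range g m,
    Finset.range_eq_Ico,
    ← Finset.sum_Ico_consecutive g (Nat.zero_le m) hmn]
  have h0 : ∑ j ∈ Finset.Ico m n, g j = 0 :=
    Finset.sum_eq_zero fun j hj => hg j (Finset.mem_Ico.mp hj).1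
  rw [h0, add_zero, Finset.range_eq_Ico]

/-- The convex hull of a nonempty compact set in a finite-dimensional normed
real vector space is compact. -/
private lemma aux_isCompact_convexHull {E : Type*} [NormedAddCommGroup E] [NormedSpace ℝ E]
    [FiniteDimensional ℝ E] {K : Set E} (hK : IsCompact K) (hne : K.Nonempty) :
    IsCompact (convexHull ℝ K) := by
  classical
  obtain ⟨e₀, he₀⟩ := hne
  set n := Module.finrank ℝ E + 1 with hn
  set F : (Fin n → ℝ) × (Fin n → E) → E := fun p => ∑ i, p.1 i • p.2 i with hF
  have hcont : Continuous F := by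
    apply continuous_finset_sum
    intro i _
    exact ((continuous_apply i).comp continuous_fst).smul
      ((continuous_apply i).comp continuous_snd)
  have himage : convexHull ℝ K =
      F '' ((stdSimplex ℝ (Fin n)) ×ˢ Set.univ.pi fun _ : Fin n => K) := by
    apply Set.Subset.antisymm
    · intro x hx
      obtain ⟨ι, hι, z, w, hzK, hai, hw0, hw1, hwz⟩ := eq_pos_convex_span_of_mem_convexHull hx
      have hcard : Fintype.card ι ≤ n :=
        le_trans hai.card_le_finrank_succ (Nat.add_le_add_right (Submodule.finrank_le _) 1)
      set m := Fintype.card ι with hm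
      set e : ι ≃ Fin m := Fintype.equivFin ι with he
      set w' : ℕ → ℝ := fun j => if h : j < m then w (e.symm ⟨j, h⟩) else 0 with hw'
      set z' : ℕ → E := fun j => if h : j < m then z (e.symm ⟨j, h⟩) else e₀ with hz'
      have hw'fin : ∀ j : Fin m, w' (j : ℕ) = w (e.symm j) := by
        intro j; simp only [hw', dif_pos j.isLt]
      have hz'fin : ∀ j : Fin m, z' (j : ℕ) = z (e.symm j) := by
        intro j; simp only [hz', dif_pos j.isLt]
      refine ⟨(fun j : Fin n => w' j, fun j : Fin n => z' j), ⟨⟨?_, ?_⟩, ?_⟩, ?_⟩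
      · intro j
        simp only [hw']
        split
        · exact le_of_lt (hw0 _)
        · exact le_refl 0
      · have h1 : ∑ j : Fin n, w' (j : ℕ) = ∑ j : Fin m, w' (j : ℕ) := by
          apply aux_sum_pad hcard
          intro j hj
          simp only [hw', dif_neg (not_lt.mpr hj)]
        rw [h1]
        calc ∑ j : Fin m, w' (j : ℕ) = ∑ j : Fin m, w (e.symm j) :=
              Finset.sum_congr rfl fun j _ => hw'fin j
          _ = ∑ i : ι, w i := Equiv.sum_comp e.symm w
          _ = 1 := hw1
      · intro j _
        simp only [hz']
        split
        · exact hzK (Set.mem_range_self _)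
        · exact he₀
      · show (∑ j : Fin n, w' (j : ℕ) • z' (j : ℕ)) = x
        have h1 : ∑ j : Fin n, w' (j : ℕ) • z' (j : ℕ) = ∑ j : Fin m, w' (j : ℕ) • z' (j : ℕ) := by
          apply aux_sum_pad hcard (fun j => w' j • z' j)
          intro j hj
          simp only [hw', dif_neg (not_lt.mpr hj), zero_smul]
        rw [h1]
        calc ∑ j : Fin m, w' (j : ℕ) • z' (j : ℕ)
            = ∑ j : Fin m, w (e.symm j) • z (e.symm j) :=
              Finset.sum_congr rfl fun j _ => by rw [hw'fin, hz'fin]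
          _ = ∑ i : ι, w i • z i := Equiv.sum_comp e.symm (fun i => w i • z i)
          _ = x := hwz
    · rintro x ⟨⟨θ, v⟩, ⟨hθ, hv⟩, rfl⟩
      exact Convex.sum_mem (convex_convexHull ℝ K) (fun i _ => hθ.1 i) hθ.2
        (fun i _ => subset_convexHull ℝ K (hv i (Set.mem_univ i)))
  rw [himage]
  exact (((isCompact_stdSimplex ℝ (Fin n)).prod (isCompact_univ_pi fun _ => hK))).image hcont

namespace SpectralDecompositionSystem

variable {γ : 𝓗 → 𝓧} {Λ : A → 𝓧 →ₗ[ℝ] 𝓗} {τ : 𝓧 → 𝓧}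

section Basic

variable (h : SpectralDecompositionSystem 𝓗 𝓧 S γ Λ τ)
include h

private lemma smul_add' (s : S) (x y : 𝓧) : s • (x + y) = s • x + s • y := by
  have := h.smul_add_smul s 1 x y
  simpa using this

private lemma smul_zero' (s : S) : s • (0 : 𝓧) = 0 := by
  have h1 := h.smul_add' s 0 0
  rw [add_zero] at h1
  exact (add_eq_right.mp h1.symm)

private lemma smul_csmul (s : S) (c : ℝ) (x : 𝓧) : s • (c • x) = c • (s • x) := by
  have := h.smul_add_smul s c x 0
  rwa [add_zero, h.smul_zero', add_zero] at this

private lemma smul_sub' (s : S) (x y : 𝓧) : s • (x - y) = s • x - s • y := by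
  have h1 : s • ((-1 : ℝ) • y + x) = (-1 : ℝ) • (s • y) + s • x := h.smul_add_smul s (-1) y x
  rw [neg_one_smul, neg_one_smul] at h1
  rw [sub_eq_neg_add, sub_eq_neg_add, h1]

private lemma inner_smul_smul (s : S) (x y : 𝓧) : ⟪s • x, s • y⟫_ℝ = ⟪x, y⟫_ℝ := by
  rw [real_inner_eq_norm_add_mul_self_sub_norm_mul_self_sub_norm_mul_self_div_two,
    real_inner_eq_norm_add_mul_self_sub_norm_mul_self_sub_norm_mul_self_div_two x y,
    ← h.smul_add', h.norm_smul, h.norm_smul, h.norm_smul]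

private lemma inner_smul_right' (s : S) (x y : 𝓧) : ⟪x, s • y⟫_ℝ = ⟪s⁻¹ • x, y⟫_ℝ := by
  rw [← h.inner_smul_smul s (s⁻¹ • x) y, smul_inv_smul]

private lemma inner_lambda (a : A) (x y : 𝓧) : ⟪Λ a x, Λ a y⟫_ℝ = ⟪x, y⟫_ℝ := by
  rw [real_inner_eq_norm_add_mul_self_sub_norm_mul_self_sub_norm_mul_self_div_two,
    real_inner_eq_norm_add_mul_self_sub_norm_mul_self_sub_norm_mul_self_div_two x y,
    ← map_add, h.norm_lambda, h.norm_lambda, h.norm_lambda]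

private lemma norm_gamma (X : 𝓗) : ‖γ X‖ = ‖X‖ := by
  obtain ⟨a, ha⟩ := h.exists_decomp X
  conv_rhs => rw [ha]
  rw [h.norm_lambda]

private lemma tau_gamma (X : 𝓗) : τ (γ X) = γ X := by
  obtain ⟨a, ha⟩ := h.exists_decomp X
  conv_rhs => rw [ha, h.gamma_lambda]

private lemma tau_tau (x : 𝓧) : τ (τ x) = τ x := by
  obtain ⟨s, hs⟩ := h.tau_orbit x
  rw [hs, h.tau_smul]
  exact hs

private lemma inner_le_tau [Nonempty A] (x y : 𝓧) : ⟪x, y⟫_ℝ ≤ ⟪τ x, τ y⟫_ℝ := by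
  have a : A := Classical.arbitrary A
  calc ⟪x, y⟫_ℝ = ⟪Λ a x, Λ a y⟫_ℝ := (h.inner_lambda a x y).symm
    _ ≤ ⟪γ (Λ a x), γ (Λ a y)⟫_ℝ := h.inner_le _ _
    _ = ⟪τ x, τ y⟫_ℝ := by rw [h.gamma_lambda, h.gamma_lambda]

private lemma gamma_lipschitz (X Y : 𝓗) : ‖γ X - γ Y‖ ≤ ‖X - Y‖ := by
  have h1 : ‖γ X - γ Y‖ ^ 2 ≤ ‖X - Y‖ ^ 2 := by
    rw [norm_sub_sq_real, norm_sub_sq_real, h.norm_gamma, h.norm_gamma]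
    have := h.inner_le X Y
    linarith
  nlinarith [norm_nonneg (γ X - γ Y), norm_nonneg (X - Y)]

private lemma continuous_gamma : Continuous γ := by
  refine (LipschitzWith.of_dist_le_mul (K := 1) fun X Y => ?_).continuous
  rw [dist_eq_norm, dist_eq_norm, NNReal.coe_one, one_mul]
  exact h.gamma_lipschitz X Y

private lemma continuous_tau : Continuous τ := by
  have a : A := Classical.arbitrary A
  have heq : τ = fun x => γ (Λ a x) := funext fun x => (h.gamma_lambda a x).symm
  rw [heq]
  exact h.continuous_gamma.comp (Λ a).continuous_of_finiteDimensional

private lemma continuous_smul' (s : S) : Continuous (fun x : 𝓧 => s • x) := by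
  refine (LipschitzWith.of_dist_le_mul (K := 1) fun x y => ?_).continuous
  rw [dist_eq_norm, dist_eq_norm, NNReal.coe_one, one_mul, ← h.smul_sub', h.norm_smul]

variable {D : Set 𝓧} (hD : ∀ x ∈ D, ∀ s : S, s • x ∈ D)
include hD

private lemma tau_mem_of_mem {x : 𝓧} (hx : x ∈ D) : τ x ∈ D := by
  obtain ⟨s, hs⟩ := h.tau_orbit x
  rw [hs]
  exact hD x hx s

private lemma mem_of_tau_mem {x : 𝓧} (hx : τ x ∈ D) : x ∈ D := by
  obtain ⟨s, hs⟩ := h.tau_orbit x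
  have h2 := hD (τ x) hx s⁻¹
  rwa [hs, inv_smul_smul] at h2

omit hD in
private lemma orbit_isClosed (w : 𝓧) : IsClosed (MulAction.orbit S w) := by
  refine isClosed_of_closure_subset fun y hy => ?_
  have h1 : τ y ∈ closure (τ '' MulAction.orbit S w) :=
    image_closure_subset_closure_image h.continuous_tau ⟨y, hy, rfl⟩
  have h2 : τ '' MulAction.orbit S w ⊆ {τ w} := by
    rintro _ ⟨_, ⟨s, rfl⟩, rfl⟩
    simp only [Set.mem_singleton_iff]
    exact h.tau_smul s w
  have h3 : τ y = τ w := by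
    have := closure_mono h2 h1
    rwa [closure_singleton, Set.mem_singleton_iff] at this
  obtain ⟨s0, hs0⟩ := h.tau_orbit y
  obtain ⟨s1, hs1⟩ := h.tau_orbit w
  refine ⟨s0⁻¹ * s1, ?_⟩
  show (s0⁻¹ * s1) • w = y
  rw [mul_smul, ← hs1, ← h3, hs0, inv_smul_smul]

end Basic

section Key

variable (h : SpectralDecompositionSystem 𝓗 𝓧 S γ Λ τ)
include h

private lemma key_ineq (Z W : 𝓗) (a b : ℝ) (ha : 0 ≤ a) (hb : 0 ≤ b) (z : 𝓧) :
    ∃ s : S, ⟪γ (a • Z + b • W), z⟫_ℝ ≤ ⟪s • (a • γ Z + b • γ W), z⟫_ℝ := by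
  obtain ⟨a', hV⟩ := h.exists_decomp (a • Z + b • W)
  obtain ⟨sz, hsz⟩ := h.tau_orbit z
  obtain ⟨sw, hsw⟩ := h.tau_orbit (a • γ Z + b • γ W)
  refine ⟨sz⁻¹ * sw, ?_⟩
  have e1 : ⟪Z, Λ a' (τ z)⟫_ℝ ≤ ⟪γ Z, τ (τ z)⟫_ℝ := by
    have := h.inner_le Z (Λ a' (τ z)); rwa [h.gamma_lambda] at this
  have e2 : ⟪W, Λ a' (τ z)⟫_ℝ ≤ ⟪γ W, τ (τ z)⟫_ℝ := by
    have := h.inner_le W (Λ a' (τ z)); rwa [h.gamma_lambda] at this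
  calc ⟪γ (a • Z + b • W), z⟫_ℝ
      ≤ ⟪τ (γ (a • Z + b • W)), τ z⟫_ℝ := h.inner_le_tau _ _
    _ = ⟪γ (a • Z + b • W), τ z⟫_ℝ := by rw [h.tau_gamma]
    _ = ⟪Λ a' (γ (a • Z + b • W)), Λ a' (τ z)⟫_ℝ := (h.inner_lambda a' _ _).symm
    _ = ⟪a • Z + b • W, Λ a' (τ z)⟫_ℝ := by rw [← hV]
    _ = a * ⟪Z, Λ a' (τ z)⟫_ℝ + b * ⟪W, Λ a' (τ z)⟫_ℝ := by
        rw [inner_add_left, real_inner_smul_left, real_inner_smul_left]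
    _ ≤ a * ⟪γ Z, τ (τ z)⟫_ℝ + b * ⟪γ W, τ (τ z)⟫_ℝ :=
        add_le_add (mul_le_mul_of_nonneg_left e1 ha) (mul_le_mul_of_nonneg_left e2 hb)
    _ = a * ⟪γ Z, τ z⟫_ℝ + b * ⟪γ W, τ z⟫_ℝ := by rw [h.tau_tau]
    _ = ⟪a • γ Z + b • γ W, τ z⟫_ℝ := by
        rw [inner_add_left, real_inner_smul_left, real_inner_smul_left]
    _ ≤ ⟪τ (a • γ Z + b • γ W), τ (τ z)⟫_ℝ := h.inner_le_tau _ _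
    _ = ⟪τ (a • γ Z + b • γ W), τ z⟫_ℝ := by rw [h.tau_tau]
    _ = ⟪sw • (a • γ Z + b • γ W), sz • z⟫_ℝ := by rw [← hsw, ← hsz]
    _ = ⟪sz⁻¹ • sw • (a • γ Z + b • γ W), z⟫_ℝ := h.inner_smul_right' sz _ z
    _ = ⟪(sz⁻¹ * sw) • (a • γ Z + b • γ W), z⟫_ℝ := by rw [mul_smul]

end Key

end SpectralDecompositionSystem

theorem spectral_set_topological_properties
    (γ : 𝓗 → 𝓧) (Λ : A → 𝓧 →ₗ[ℝ] 𝓗) (τ : 𝓧 → 𝓧)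
    (hsys : SpectralDecompositionSystem 𝓗 𝓧 S γ Λ τ)
    (D : Set 𝓧) (hD : ∀ x ∈ D, ∀ s : S, s • x ∈ D) :
    interior (γ ⁻¹' D) = γ ⁻¹' interior D ∧
    closure (γ ⁻¹' D) = γ ⁻¹' closure D ∧
    (IsClosed (γ ⁻¹' D) ↔ IsClosed D) ∧
    (Convex ℝ (γ ⁻¹' D) ↔ Convex ℝ D) := by
  classical
  have hcγ : Continuous γ := hsys.continuous_gamma
  have hcτ : Continuous τ := hsys.continuous_tau
  have hint : interior (γ ⁻¹' D) = γ ⁻¹' interior D := by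
    apply Set.Subset.antisymm
    · intro Z hZ
      rw [mem_interior_iff_mem_nhds, Metric.mem_nhds_iff] at hZ
      obtain ⟨ε, hε, hball⟩ := hZ
      rw [Set.mem_preimage, mem_interior_iff_mem_nhds, Metric.mem_nhds_iff]
      obtain ⟨a, ha⟩ := hsys.exists_decomp Z
      refine ⟨ε, hε, fun x hx => ?_⟩
      have h1 : Λ a x ∈ Metric.ball Z ε := by
        rw [Metric.mem_ball, dist_eq_norm] at hx ⊢
        calc ‖Λ a x - Z‖ = ‖Λ a (x - γ Z)‖ := by rw [map_sub, ← ha]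
          _ = ‖x - γ Z‖ := hsys.norm_lambda _ _
          _ < ε := hx
      have h2 := hball h1
      rw [Set.mem_preimage, hsys.gamma_lambda] at h2
      exact hsys.mem_of_tau_mem hD h2
    · exact interior_maximal (Set.preimage_mono interior_subset) (isOpen_interior.preimage hcγ)
  have hclo : closure (γ ⁻¹' D) = γ ⁻¹' closure D := by
    apply Set.Subset.antisymm
    · exact closure_minimal (Set.preimage_mono subset_closure) (isClosed_closure.preimage hcγ)
    · intro Z hZ
      rw [Set.mem_preimage, Metric.mem_closure_iff] at hZ
      obtain ⟨a, ha⟩ := hsys.exists_decomp Z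
      rw [Metric.mem_closure_iff]
      intro ε hε
      obtain ⟨x, hxD, hxd⟩ := hZ ε hε
      refine ⟨Λ a x, ?_, ?_⟩
      · rw [Set.mem_preimage, hsys.gamma_lambda]
        exact hsys.tau_mem_of_mem hD hxD
      · rw [dist_eq_norm]
        nth_rewrite 1 [ha]
        rw [← map_sub, hsys.norm_lambda, ← dist_eq_norm]
        exact hxd
  refine ⟨hint, hclo, ⟨fun hclosed => ?_, fun hclosed => hclosed.preimage hcγ⟩,
    ⟨fun hpre => ?_, fun hDc => ?_⟩⟩
  · -- γ⁻¹D closed → D closed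
    refine isClosed_of_closure_subset fun x hx => ?_
    have hτx : τ x ∈ closure D := by
      have h1 : τ x ∈ closure (τ '' D) := image_closure_subset_closure_image hcτ ⟨x, hx, rfl⟩
      refine closure_mono ?_ h1
      rintro _ ⟨d, hd, rfl⟩
      exact hsys.tau_mem_of_mem hD hd
    have a : A := Classical.arbitrary A
    have h2 : Λ a x ∈ γ ⁻¹' closure D := by
      rw [Set.mem_preimage, hsys.gamma_lambda]; exact hτx
    rw [← hclo, hclosed.closure_eq] at h2
    rw [Set.mem_preimage, hsys.gamma_lambda] at h2
    exact hsys.mem_of_tau_mem hD h2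
  · -- γ⁻¹D convex → D convex
    intro x hx y hy a b ha hb hab
    have a0 : A := Classical.arbitrary A
    have h1 : Λ a0 x ∈ γ ⁻¹' D := by
      rw [Set.mem_preimage, hsys.gamma_lambda]; exact hsys.tau_mem_of_mem hD hx
    have h2 : Λ a0 y ∈ γ ⁻¹' D := by
      rw [Set.mem_preimage, hsys.gamma_lambda]; exact hsys.tau_mem_of_mem hD hy
    have h3 := hpre h1 h2 ha hb hab
    rw [Set.mem_preimage] at h3
    have h4 : a • Λ a0 x + b • Λ a0 y = Λ a0 (a • x + b • y) := by
      rw [map_add, map_smul, map_smul]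
    rw [h4, hsys.gamma_lambda] at h3
    exact hsys.mem_of_tau_mem hD h3
  · -- D convex → γ⁻¹D convex
    intro Z hZ W hW a b ha hb hab
    rw [Set.mem_preimage] at hZ hW ⊢
    have hwD : a • γ Z + b • γ W ∈ D := hDc hZ hW ha hb hab
    set w := a • γ Z + b • γ W with hw
    have horb : MulAction.orbit S w ⊆ D := by
      rintro _ ⟨s, rfl⟩
      exact hD w hwD s
    have horbC : IsCompact (MulAction.orbit S w) := by
      refine Metric.isCompact_of_isClosed_isBounded (hsys.orbit_isClosed w) ?_
      refine (Metric.isBounded_closedBall (x := (0 : 𝓧)) (r := ‖w‖)).subset ?_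
      rintro _ ⟨s, rfl⟩
      rw [Metric.mem_closedBall, dist_zero_right]
      exact le_of_eq (hsys.norm_smul s w)
    have hCc : IsCompact (convexHull ℝ (MulAction.orbit S w)) :=
      aux_isCompact_convexHull horbC ⟨w, MulAction.mem_orbit_self w⟩
    by_contra hu
    have hu2 : γ (a • Z + b • W) ∉ convexHull ℝ (MulAction.orbit S w) :=
      fun hmem => hu (convexHull_min horb hDc hmem)
    obtain ⟨f, c, hfc, hcf⟩ :=
      geometric_hahn_banach_closed_point (convex_convexHull ℝ _) hCc.isClosed hu2
    set z := (InnerProductSpace.toDual ℝ 𝓧).symm f with hz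
    have hfz : ∀ p : 𝓧, f p = ⟪z, p⟫_ℝ := fun p => (InnerProductSpace.toDual_symm_apply).symm
    obtain ⟨s, hs⟩ := hsys.key_ineq Z W a b ha hb z
    rw [← hw] at hs
    have h5 : f (s • w) < c := hfc _ (subset_convexHull ℝ _ ⟨s, rfl⟩)
    rw [hfz] at h5 hcf
    rw [real_inner_comm] at h5 hcf
    linarith
end

section
/- Let 𝔥 be a Euclidean space with spectral decomposition system (𝒳, S, γ, (Λ_a)_{a∈A}), and let D be a nonempty S-invariant subset of 𝒳 (i.e., s • x ∈ D for all x ∈ D and s ∈ S). Then: (i) the convex hull of γ⁻¹(D) equals γ⁻¹(conv D); and (ii) if D is convex, then the set of extreme points of γ⁻¹(D) equals γ⁻¹(set of extreme points of D). -/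
set_option linter.unusedSectionVars false


open scoped InnerProductSpace

variable {𝓗 𝓧 : Type*} [NormedAddCommGroup 𝓗] [InnerProductSpace ℝ 𝓗]
  [FiniteDimensional ℝ 𝓗] [NormedAddCommGroup 𝓧] [InnerProductSpace ℝ 𝓧]
  [FiniteDimensional ℝ 𝓧] {S : Type*} [Group S] [MulAction S 𝓧]
  {A : Type*} [Nonempty A]

lemma sds_sum_embed {ι κ M : Type*} [Fintype ι] [Fintype κ] [AddCommMonoid M]
    (e : ι ↪ κ) (F : κ → M) (h0 : ∀ j, ¬(∃ i, e i = j) → F j = 0) :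
    ∑ j, F j = ∑ i, F (e i) := by
  rw [← Finset.sum_map Finset.univ e F]
  refine (Finset.sum_subset (Finset.subset_univ _) ?_).symm
  intro j _ hj
  apply h0
  intro ⟨i, hi⟩
  exact hj (Finset.mem_map.mpr ⟨i, Finset.mem_univ i, hi⟩)

/-- In a finite-dimensional normed space, the convex hull of a compact set is compact. -/
lemma sds_isCompact_convexHull {E : Type*} [NormedAddCommGroup E] [NormedSpace ℝ E]
    [FiniteDimensional ℝ E] {s : Set E} (hne : s.Nonempty) (hs : IsCompact s) :
    IsCompact (convexHull ℝ s) := by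
  classical
  obtain ⟨x₀, hx₀⟩ := hne
  set n := Module.finrank ℝ E + 1 with hn
  let T : (Fin n → ℝ) × (Fin n → E) → E := fun p => ∑ i, p.1 i • p.2 i
  have hT : Continuous T := by
    apply continuous_finset_sum
    intro i _
    exact ((continuous_apply i).comp continuous_fst).smul
      ((continuous_apply i).comp continuous_snd)
  have hcomp : IsCompact ((stdSimplex ℝ (Fin n)) ×ˢ (Set.univ.pi fun _ : Fin n => s)) :=
    (isCompact_stdSimplex (𝕜 := ℝ) (ι := Fin n)).prod (isCompact_univ_pi fun _ => hs)
  have himg : T '' ((stdSimplex ℝ (Fin n)) ×ˢ (Set.univ.pi fun _ : Fin n => s))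
      = convexHull ℝ s := by
    apply Set.Subset.antisymm
    · rintro x ⟨⟨w, z⟩, ⟨⟨hw0, hw1⟩, hz⟩, rfl⟩
      exact (convex_convexHull ℝ s).sum_mem (fun i _ => hw0 i) hw1
        (fun i _ => subset_convexHull ℝ s (hz i (Set.mem_univ i)))
    · intro x hx
      obtain ⟨ι, hfin, z, w, hzs, hai, hw0, hw1, hwz⟩ := eq_pos_convex_span_of_mem_convexHull hx
      have hcard : Fintype.card ι ≤ n := by
        refine (hai.card_le_finrank_succ).trans ?_
        exact Nat.add_le_add_right (Submodule.finrank_le _) 1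
      obtain ⟨e⟩ : Nonempty (ι ↪ Fin n) := by
        apply Function.Embedding.nonempty_of_card_le
        rwa [Fintype.card_fin]
      let w' : Fin n → ℝ := fun j => if h : ∃ i, e i = j then w h.choose else 0
      let z' : Fin n → E := fun j => if h : ∃ i, e i = j then z h.choose else x₀
      have hwe : ∀ i, w' (e i) = w i := by
        intro i
        have h : ∃ i', e i' = e i := ⟨i, rfl⟩
        simp only [w', dif_pos h]
        exact congrArg w (e.injective h.choose_spec)
      have hze : ∀ i, z' (e i) = z i := by
        intro i
        have h : ∃ i', e i' = e i := ⟨i, rfl⟩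
        simp only [z', dif_pos h]
        exact congrArg z (e.injective h.choose_spec)
      have hw'0 : ∀ j, ¬(∃ i, e i = j) → w' j = 0 := by
        intro j hj; simp only [w', dif_neg hj]
      refine ⟨⟨w', z'⟩, ⟨⟨?_, ?_⟩, ?_⟩, ?_⟩
      · intro j
        by_cases h : ∃ i, e i = j
        · simp only [w', dif_pos h]; exact (hw0 _).le
        · simp only [w', dif_neg h]; exact le_refl _
      · rw [sds_sum_embed e w' hw'0]
        rw [← hw1]
        exact Finset.sum_congr rfl fun i _ => hwe i
      · intro j _
        by_cases h : ∃ i, e i = j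
        · simp only [z', dif_pos h]
          exact hzs ⟨h.choose, rfl⟩
        · simp only [z', dif_neg h]; exact hx₀
      · show ∑ j, w' j • z' j = x
        rw [sds_sum_embed e (fun j => w' j • z' j) (fun j hj => by show w' j • z' j = 0; rw [hw'0 j hj, zero_smul])]
        rw [← hwz]
        exact Finset.sum_congr rfl fun i _ => by rw [hwe, hze]
  have := hcomp.image hT
  rwa [himg] at this

section Aux

variable {γ : 𝓗 → 𝓧} {Λ : A → 𝓧 →ₗ[ℝ] 𝓗} {τ : 𝓧 → 𝓧}

lemma sds_smul_zero (hsys : SpectralDecompositionSystem 𝓗 𝓧 S γ Λ τ) (s : S) :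
    s • (0 : 𝓧) = 0 := by
  have h := hsys.smul_add_smul s 1 0 0
  simp only [one_smul, add_zero, zero_add] at h
  have := congrArg (fun z => z - s • (0:𝓧)) h
  simpa using this.symm

lemma sds_smul_add (hsys : SpectralDecompositionSystem 𝓗 𝓧 S γ Λ τ) (s : S) (x y : 𝓧) :
    s • (x + y) = s • x + s • y := by
  have h := hsys.smul_add_smul s 1 x y
  simpa using h

lemma sds_smul_smul (hsys : SpectralDecompositionSystem 𝓗 𝓧 S γ Λ τ) (s : S) (c : ℝ) (x : 𝓧) :
    s • (c • x) = c • (s • x) := by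
  have h := hsys.smul_add_smul s c x 0
  simpa [sds_smul_zero hsys s] using h

/-- The action of `s` as a linear map. -/
noncomputable def sds_L (hsys : SpectralDecompositionSystem 𝓗 𝓧 S γ Λ τ) (s : S) : 𝓧 →ₗ[ℝ] 𝓧 where
  toFun := fun x => s • x
  map_add' := sds_smul_add hsys s
  map_smul' := fun c x => sds_smul_smul hsys s c x

lemma sds_inner_smul (hsys : SpectralDecompositionSystem 𝓗 𝓧 S γ Λ τ) (s : S) (x y : 𝓧) :
    ⟪s • x, s • y⟫_ℝ = ⟪x, y⟫_ℝ := by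
  rw [real_inner_eq_norm_add_mul_self_sub_norm_mul_self_sub_norm_mul_self_div_two,
    real_inner_eq_norm_add_mul_self_sub_norm_mul_self_sub_norm_mul_self_div_two x y,
    ← sds_smul_add hsys s, hsys.norm_smul, hsys.norm_smul, hsys.norm_smul]

lemma sds_inner_smul_left (hsys : SpectralDecompositionSystem 𝓗 𝓧 S γ Λ τ) (s : S) (x w : 𝓧) :
    ⟪s • x, w⟫_ℝ = ⟪x, s⁻¹ • w⟫_ℝ := by
  conv_lhs => rw [← smul_inv_smul s w]
  exact sds_inner_smul hsys s x (s⁻¹ • w)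

lemma sds_inner_lambda (hsys : SpectralDecompositionSystem 𝓗 𝓧 S γ Λ τ) (a : A) (x y : 𝓧) :
    ⟪Λ a x, Λ a y⟫_ℝ = ⟪x, y⟫_ℝ := by
  rw [real_inner_eq_norm_add_mul_self_sub_norm_mul_self_sub_norm_mul_self_div_two,
    real_inner_eq_norm_add_mul_self_sub_norm_mul_self_sub_norm_mul_self_div_two x y,
    ← map_add, hsys.norm_lambda, hsys.norm_lambda, hsys.norm_lambda]

lemma sds_norm_tau (hsys : SpectralDecompositionSystem 𝓗 𝓧 S γ Λ τ) (x : 𝓧) :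
    ‖τ x‖ = ‖x‖ := by
  obtain ⟨s, hs⟩ := hsys.tau_orbit x
  rw [hs, hsys.norm_smul]

lemma sds_tau_inner (hsys : SpectralDecompositionSystem 𝓗 𝓧 S γ Λ τ) (x y : 𝓧) :
    ⟪x, y⟫_ℝ ≤ ⟪τ x, τ y⟫_ℝ := by
  obtain ⟨a⟩ : Nonempty A := inferInstance
  calc ⟪x, y⟫_ℝ = ⟪Λ a x, Λ a y⟫_ℝ := (sds_inner_lambda hsys a x y).symm
    _ ≤ ⟪γ (Λ a x), γ (Λ a y)⟫_ℝ := hsys.inner_le _ _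
    _ = ⟪τ x, τ y⟫_ℝ := by rw [hsys.gamma_lambda, hsys.gamma_lambda]

lemma sds_tau_tau (hsys : SpectralDecompositionSystem 𝓗 𝓧 S γ Λ τ) (x : 𝓧) :
    τ (τ x) = τ x := by
  obtain ⟨s, hs⟩ := hsys.tau_orbit x
  rw [hs, hsys.tau_smul, ← hs]

lemma sds_norm_gamma (hsys : SpectralDecompositionSystem 𝓗 𝓧 S γ Λ τ) (Z : 𝓗) :
    ‖γ Z‖ = ‖Z‖ := by
  obtain ⟨a, ha⟩ := hsys.exists_decomp Z
  conv_rhs => rw [ha]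
  rw [hsys.norm_lambda]

lemma sds_orbit_closed (hsys : SpectralDecompositionSystem 𝓗 𝓧 S γ Λ τ) (y : 𝓧) :
    IsClosed (Set.range fun g : S => g • y) := by
  apply IsSeqClosed.isClosed
  intro x w hx hlim
  choose g hg using hx
  have hnorm : ‖w‖ = ‖y‖ := by
    have h1 : Filter.Tendsto (fun n => ‖x n‖) Filter.atTop (nhds ‖w‖) := hlim.norm
    have h2 : (fun n => ‖x n‖) = fun _ => ‖y‖ := by
      funext n; rw [← hg n, hsys.norm_smul]
    rw [h2] at h1
    exact (tendsto_nhds_unique h1 tendsto_const_nhds)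
  have hub : ⟪w, w⟫_ℝ ≤ ⟪τ y, τ w⟫_ℝ := by
    have hcont : Filter.Tendsto (fun n => ⟪x n, w⟫_ℝ) Filter.atTop (nhds ⟪w, w⟫_ℝ) :=
      hlim.inner tendsto_const_nhds
    refine le_of_tendsto hcont ?_
    filter_upwards with n
    calc ⟪x n, w⟫_ℝ ≤ ⟪τ (x n), τ w⟫_ℝ := sds_tau_inner hsys _ _
      _ = ⟪τ y, τ w⟫_ℝ := by rw [← hg n, hsys.tau_smul]
  have heq : τ y = τ w := by
    have hexp : ‖τ y - τ w‖ ^ 2 = ‖τ y‖ ^ 2 - 2 * ⟪τ y, τ w⟫_ℝ + ‖τ w‖ ^ 2 :=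
      norm_sub_sq_real _ _
    rw [sds_norm_tau hsys, sds_norm_tau hsys, hnorm] at hexp
    rw [real_inner_self_eq_norm_sq, hnorm] at hub
    have h0 : ‖τ y - τ w‖ ^ 2 ≤ 0 := by nlinarith
    have h00 : ‖τ y - τ w‖ = 0 := by nlinarith [norm_nonneg (τ y - τ w)]
    exact sub_eq_zero.mp (norm_eq_zero.mp h00)
  obtain ⟨g', hg'⟩ := hsys.tau_orbit w
  obtain ⟨g₂, hg₂⟩ := hsys.tau_orbit y
  refine ⟨g'⁻¹ * g₂, ?_⟩
  show (g'⁻¹ * g₂) • y = w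
  rw [mul_smul, ← hg₂, heq, hg', inv_smul_smul]

lemma sds_hull_inv (hsys : SpectralDecompositionSystem 𝓗 𝓧 S γ Λ τ)
    {D : Set 𝓧} (hD : ∀ x ∈ D, ∀ s : S, s • x ∈ D)
    {x : 𝓧} (hx : x ∈ convexHull ℝ D) (g : S) : g • x ∈ convexHull ℝ D := by
  have hsub : convexHull ℝ D ⊆ (sds_L hsys g) ⁻¹' (convexHull ℝ D) := by
    apply convexHull_min
    · intro d hd
      exact subset_convexHull ℝ D (hD d hd g)
    · exact (convex_convexHull ℝ D).linear_preimage (sds_L hsys g)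
  exact hsub hx

/-- Key separation lemma: if `⟪u, z⟫ ≤ ⟪τ u, τ y⟫` for all `u`, then `z` lies in the
convex hull of the orbit of `y`. -/
lemma sds_mem_orbit_hull (hsys : SpectralDecompositionSystem 𝓗 𝓧 S γ Λ τ)
    {z y : 𝓧} (h : ∀ u, ⟪u, z⟫_ℝ ≤ ⟪τ u, τ y⟫_ℝ) :
    z ∈ convexHull ℝ (Set.range fun g : S => g • y) := by
  by_contra hz
  have horb : IsCompact (Set.range fun g : S => g • y) := by
    apply Metric.isCompact_of_isClosed_isBounded (sds_orbit_closed hsys y)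
    apply isBounded_iff_forall_norm_le.mpr
    refine ⟨‖y‖, ?_⟩
    rintro x ⟨g, rfl⟩
    exact le_of_eq (hsys.norm_smul g y)
  have hK : IsCompact (convexHull ℝ (Set.range fun g : S => g • y)) :=
    sds_isCompact_convexHull ⟨y, 1, one_smul _ y⟩ horb
  obtain ⟨f, u0, hfa, hux⟩ :=
    geometric_hahn_banach_closed_point (convex_convexHull ℝ _) hK.isClosed hz
  haveI : CompleteSpace 𝓧 := FiniteDimensional.complete ℝ 𝓧
  set u := (InnerProductSpace.toDual ℝ 𝓧).symm f with hu
  have hfu : ∀ w, f w = ⟪u, w⟫_ℝ := fun w => (InnerProductSpace.toDual_symm_apply).symm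
  obtain ⟨g₁, hg₁⟩ := hsys.tau_orbit u
  obtain ⟨g₂, hg₂⟩ := hsys.tau_orbit y
  have hpmem : (g₁⁻¹ * g₂) • y ∈ convexHull ℝ (Set.range fun g : S => g • y) :=
    subset_convexHull ℝ _ ⟨g₁⁻¹ * g₂, rfl⟩
  have hp : ⟪u, (g₁⁻¹ * g₂) • y⟫_ℝ = ⟪τ u, τ y⟫_ℝ := by
    rw [hg₁, hg₂, mul_smul]
    rw [← sds_inner_smul hsys g₁ u (g₁⁻¹ • g₂ • y), smul_inv_smul]
  have h1 : f ((g₁⁻¹ * g₂) • y) < u0 := hfa _ hpmem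
  have h2 : u0 < f z := hux
  rw [hfu] at h1 h2
  have h3 : ⟪u, z⟫_ℝ ≤ ⟪u, (g₁⁻¹ * g₂) • y⟫_ℝ := by rw [hp]; exact h u
  linarith

/-- The central inequality: the image under `γ` of a convex combination lies in the convex
hull of the orbit of the corresponding combination of the `γ`-images. -/
lemma sds_key (hsys : SpectralDecompositionSystem 𝓗 𝓧 S γ Λ τ)
    (Z₁ Z₂ : 𝓗) {t s : ℝ} (ht : 0 ≤ t) (hs : 0 ≤ s) (hts : t + s = 1) :
    γ (t • Z₁ + s • Z₂) ∈
      convexHull ℝ (Set.range fun g : S => g • (t • γ Z₁ + s • γ Z₂)) := by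
  apply sds_mem_orbit_hull hsys
  intro u
  set Z := t • Z₁ + s • Z₂ with hZ
  set y := t • γ Z₁ + s • γ Z₂ with hy
  obtain ⟨a, ha⟩ := hsys.exists_decomp Z
  have step1 : ⟪u, γ Z⟫_ℝ = ⟪Λ a u, Z⟫_ℝ := by
    conv_rhs => rw [ha]
    rw [sds_inner_lambda hsys]
  have step2 : ⟪Λ a u, Z⟫_ℝ = t * ⟪Λ a u, Z₁⟫_ℝ + s * ⟪Λ a u, Z₂⟫_ℝ := by
    rw [hZ, inner_add_right, real_inner_smul_right, real_inner_smul_right]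
  have step3 : t * ⟪Λ a u, Z₁⟫_ℝ + s * ⟪Λ a u, Z₂⟫_ℝ
      ≤ t * ⟪γ (Λ a u), γ Z₁⟫_ℝ + s * ⟪γ (Λ a u), γ Z₂⟫_ℝ := by
    have i1 := hsys.inner_le (Λ a u) Z₁
    have i2 := hsys.inner_le (Λ a u) Z₂
    have := mul_le_mul_of_nonneg_left i1 ht
    have := mul_le_mul_of_nonneg_left i2 hs
    nlinarith
  have step4 : t * ⟪γ (Λ a u), γ Z₁⟫_ℝ + s * ⟪γ (Λ a u), γ Z₂⟫_ℝ = ⟪τ u, y⟫_ℝ := by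
    rw [hsys.gamma_lambda, hy, inner_add_right, real_inner_smul_right, real_inner_smul_right]
  have step5 : ⟪τ u, y⟫_ℝ ≤ ⟪τ u, τ y⟫_ℝ := by
    calc ⟪τ u, y⟫_ℝ ≤ ⟪τ (τ u), τ y⟫_ℝ := sds_tau_inner hsys (τ u) y
      _ = ⟪τ u, τ y⟫_ℝ := by rw [sds_tau_tau hsys]
  calc ⟪u, γ Z⟫_ℝ = t * ⟪Λ a u, Z₁⟫_ℝ + s * ⟪Λ a u, Z₂⟫_ℝ := by rw [step1, step2]
    _ ≤ t * ⟪γ (Λ a u), γ Z₁⟫_ℝ + s * ⟪γ (Λ a u), γ Z₂⟫_ℝ := step3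
    _ = ⟪τ u, y⟫_ℝ := step4
    _ ≤ ⟪τ u, τ y⟫_ℝ := step5

lemma sds_lambda_inj (hsys : SpectralDecompositionSystem 𝓗 𝓧 S γ Λ τ) (a : A) :
    Function.Injective (Λ a) := by
  intro u v h
  have : ‖u - v‖ = 0 := by rw [← hsys.norm_lambda a, map_sub, h, sub_self, norm_zero]
  exact sub_eq_zero.mp (norm_eq_zero.mp this)

end Aux

theorem spectral_set_convexHull_and_extremePoints
    (γ : 𝓗 → 𝓧) (Λ : A → 𝓧 →ₗ[ℝ] 𝓗) (τ : 𝓧 → 𝓧)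
    (hsys : SpectralDecompositionSystem 𝓗 𝓧 S γ Λ τ)
    (D : Set 𝓧) (hne : D.Nonempty) (hD : ∀ x ∈ D, ∀ s : S, s • x ∈ D) :
    convexHull ℝ (γ ⁻¹' D) = γ ⁻¹' (convexHull ℝ D) ∧
    (Convex ℝ D →
      Set.extremePoints ℝ (γ ⁻¹' D) = γ ⁻¹' (Set.extremePoints ℝ D)) := by
  classical
  have hmemΛ : ∀ (a : A) (x : 𝓧), x ∈ D → Λ a x ∈ γ ⁻¹' D := by
    intro a x hx
    show γ (Λ a x) ∈ D
    rw [hsys.gamma_lambda]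
    obtain ⟨g, hg⟩ := hsys.tau_orbit x
    rw [hg]; exact hD x hx g
  constructor
  · apply Set.Subset.antisymm
    · apply convexHull_min
      · exact fun Z hZ => subset_convexHull ℝ D hZ
      · intro Z₁ hZ₁ Z₂ hZ₂ t s ht hs hts
        show γ (t • Z₁ + s • Z₂) ∈ convexHull ℝ D
        have hy : t • γ Z₁ + s • γ Z₂ ∈ convexHull ℝ D :=
          (convex_convexHull ℝ D) hZ₁ hZ₂ ht hs hts
        have hz := sds_key hsys Z₁ Z₂ ht hs hts
        have hsub : convexHull ℝ (Set.range fun g : S => g • (t • γ Z₁ + s • γ Z₂))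
            ⊆ convexHull ℝ D := by
          apply convexHull_min _ (convex_convexHull ℝ D)
          rintro x ⟨g, rfl⟩
          exact sds_hull_inv hsys hD hy g
        exact hsub hz
    · intro Z hZ
      have hZ' : γ Z ∈ convexHull ℝ D := hZ
      rw [convexHull_eq] at hZ'
      obtain ⟨ι, tt, w, zf, hw0, hw1, hzD, hcm⟩ := hZ'
      obtain ⟨a, ha⟩ := hsys.exists_decomp Z
      have hZrep : Z = ∑ i ∈ tt, w i • Λ a (zf i) := by
        rw [ha, ← hcm, Finset.centerMass_eq_of_sum_1 _ _ hw1, map_sum]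
        exact Finset.sum_congr rfl fun i _ => by rw [map_smul]
      rw [hZrep]
      exact (convex_convexHull ℝ (γ ⁻¹' D)).sum_mem hw0 hw1
        (fun i hi => subset_convexHull ℝ _ (hmemΛ a (zf i) (hzD i hi)))
  · intro hDc
    ext Z
    rw [Set.mem_preimage]
    constructor
    · intro hZ
      rw [mem_extremePoints] at hZ ⊢
      obtain ⟨hZmem, hZext⟩ := hZ
      refine ⟨hZmem, ?_⟩
      intro x₁ hx₁ x₂ hx₂ hseg
      obtain ⟨α, β, hα, hβ, hαβ, hsum⟩ := hseg
      obtain ⟨a, ha⟩ := hsys.exists_decomp Z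
      have hZseg : Z ∈ openSegment ℝ (Λ a x₁) (Λ a x₂) := by
        refine ⟨α, β, hα, hβ, hαβ, ?_⟩
        rw [← map_smul, ← map_smul, ← map_add, hsum, ← ha]
      obtain ⟨e1, e2⟩ := hZext _ (hmemΛ a x₁ hx₁) _ (hmemΛ a x₂ hx₂) hZseg
      have h12 : x₁ = x₂ := sds_lambda_inj hsys a (e1.trans e2.symm)
      have hx : γ Z = x₁ := by
        rw [← hsum, ← h12, ← add_smul, hαβ, one_smul]
      exact ⟨hx.symm, by rw [← h12]; exact hx.symm⟩
    · intro hZ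
      rw [mem_extremePoints] at hZ ⊢
      obtain ⟨hmem, hext⟩ := hZ
      refine ⟨hmem, ?_⟩
      intro Z₁ hZ₁ Z₂ hZ₂ hseg
      obtain ⟨α, β, hα, hβ, hαβ, hsum⟩ := hseg
      set y := α • γ Z₁ + β • γ Z₂ with hy
      have hyD : y ∈ D := hDc hZ₁ hZ₂ hα.le hβ.le hαβ
      have horbD : ∀ g : S, g • y ∈ D := fun g => hD y hyD g
      have hz_hull : γ Z ∈ convexHull ℝ (Set.range fun g : S => g • y) := by
        rw [← hsum]
        exact sds_key hsys Z₁ Z₂ hα.le hβ.le hαβ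
      have hsubD : convexHull ℝ (Set.range fun g : S => g • y) ⊆ D := by
        apply convexHull_min _ hDc
        rintro x ⟨g, rfl⟩; exact horbD g
      have hzhullext : γ Z ∈ Set.extremePoints ℝ
          (convexHull ℝ (Set.range fun g : S => g • y)) := by
        rw [mem_extremePoints]
        exact ⟨hz_hull, fun p₁ hp₁ p₂ hp₂ hs => hext _ (hsubD hp₁) _ (hsubD hp₂) hs⟩
      obtain ⟨g₀, hg₀⟩ := extremePoints_convexHull_subset hzhullext
      replace hg₀ : g₀ • y = γ Z := hg₀
      have hyext : ∀ x₁ ∈ D, ∀ x₂ ∈ D, y ∈ openSegment ℝ x₁ x₂ → x₁ = y ∧ x₂ = y := by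
        intro x₁ hx₁ x₂ hx₂ hseg'
        obtain ⟨a', b', ha', hb', hab', hsum'⟩ := hseg'
        have himg : γ Z ∈ openSegment ℝ (g₀ • x₁) (g₀ • x₂) := by
          refine ⟨a', b', ha', hb', hab', ?_⟩
          rw [← sds_smul_smul hsys g₀ a' x₁, ← sds_smul_smul hsys g₀ b' x₂,
            ← sds_smul_add hsys g₀, hsum', hg₀]
        obtain ⟨f₁, f₂⟩ := hext _ (hD x₁ hx₁ g₀) _ (hD x₂ hx₂ g₀) himg
        have hyz : g₀⁻¹ • γ Z = y := by rw [← hg₀, inv_smul_smul]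
        constructor
        · have h1 : x₁ = g₀⁻¹ • γ Z := by rw [← f₁, inv_smul_smul]
          exact h1.trans hyz
        · have h2 : x₂ = g₀⁻¹ • γ Z := by rw [← f₂, inv_smul_smul]
          exact h2.trans hyz
      have hyseg : y ∈ openSegment ℝ (γ Z₁) (γ Z₂) := ⟨α, β, hα, hβ, hαβ, rfl⟩
      obtain ⟨q₁, q₂⟩ := hyext _ hZ₁ _ hZ₂ hyseg
      have n1 : ‖Z₁‖ = ‖y‖ := by rw [← sds_norm_gamma hsys Z₁, q₁]
      have n2 : ‖Z₂‖ = ‖y‖ := by rw [← sds_norm_gamma hsys Z₂, q₂]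
      have nZ : ‖Z‖ = ‖y‖ := by
        rw [← sds_norm_gamma hsys Z, ← hg₀, hsys.norm_smul]
      have e1 : ‖α • Z₁‖ = α * ‖y‖ := by
        rw [norm_smul, n1, Real.norm_eq_abs, abs_of_pos hα]
      have e2 : ‖β • Z₂‖ = β * ‖y‖ := by
        rw [norm_smul, n2, Real.norm_eq_abs, abs_of_pos hβ]
      have expand : ‖y‖ ^ 2 = (α * ‖y‖) ^ 2 + 2 * (α * (β * ⟪Z₁, Z₂⟫_ℝ)) + (β * ‖y‖) ^ 2 := by
        have h0 := norm_add_sq_real (α • Z₁) (β • Z₂)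
        rw [hsum, nZ, e1, e2, real_inner_smul_left, real_inner_smul_right] at h0
        exact h0
      have habne : (2 * (α * β)) ≠ 0 := by positivity
      have hkey : (2 * (α * β)) * ⟪Z₁, Z₂⟫_ℝ = (2 * (α * β)) * ‖y‖ ^ 2 := by
        linear_combination (-1 : ℝ) * expand + (-(‖y‖^2) * (α + β + 1)) * hαβ
      have hinner : ⟪Z₁, Z₂⟫_ℝ = ‖y‖ ^ 2 := mul_left_cancel₀ habne hkey
      have hZ12 : Z₁ = Z₂ := by
        have hd : ‖Z₁ - Z₂‖ ^ 2 = 0 := by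
          rw [norm_sub_sq_real, n1, n2, hinner]; ring
        exact sub_eq_zero.mp (norm_eq_zero.mp (sq_eq_zero_iff.mp hd))
      have hZZ1 : Z₁ = Z := by
        have h3 : α • Z₁ + β • Z₂ = Z₁ := by rw [← hZ12, ← add_smul, hαβ, one_smul]
        exact h3.symm.trans hsum
      exact ⟨hZZ1, hZ12 ▸ hZZ1⟩
end
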